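/- For all n ≥ 2, ∑_{i=1}^{n-1} 2^{2i-1} * C_{i-1} * C_{2n-1-2i} = 4^{n-1} * C_{n-1} - C_{2n-2}, where C_m denotes the m-th Catalan number. -/

import Mathlib

open PowerSeries Finset

private noncomputable def Eaux : PowerSeries ℤ := PowerSeries.mk fun m => (catalan (2*m) : ℤ)
private noncomputable def Oaux : PowerSeries ℤ := PowerSeries.mk fun m => (catalan (2*m+1) : ℤ)
private noncomputable def Daux : PowerSeries ℤ := PowerSeries.mk fun m => 4^m * (catalan m : ℤ)

private lemma sum_range_even (f : ℕ → ℤ) (N : ℕ) :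
    ∑ i ∈ range (2*N), f i = ∑ a ∈ range N, f (2*a) + ∑ a ∈ range N, f (2*a+1) := by
  induction N with
  | zero => simp
  | succ N ih =>
    have h : 2*(N+1) = (2*N)+1+1 := by ring
    rw [h, sum_range_succ, sum_range_succ, ih, sum_range_succ, sum_range_succ]
    ring

private lemma sum_range_odd (f : ℕ → ℤ) (N : ℕ) :
    ∑ i ∈ range (2*N+1), f i = ∑ a ∈ range (N+1), f (2*a) + ∑ a ∈ range N, f (2*a+1) := by
  rw [sum_range_succ, sum_range_even, sum_range_succ]
  ring

private lemma coeff_Eaux (n : ℕ) : (PowerSeries.coeff (R := ℤ) n) Eaux = (catalan (2*n) : ℤ) := by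
  simp [Eaux]

private lemma coeff_Oaux (n : ℕ) : (PowerSeries.coeff (R := ℤ) n) Oaux = (catalan (2*n+1) : ℤ) := by
  simp [Oaux]

private lemma coeff_Daux (n : ℕ) : (PowerSeries.coeff (R := ℤ) n) Daux = 4^n * (catalan n : ℤ) := by
  simp [Daux]

/-- The catalan convolution identity, cast to ℤ. -/
private lemma catalan_conv (n : ℕ) :
    (catalan (n+1) : ℤ) = ∑ i ∈ range (n+1), (catalan i : ℤ) * (catalan (n-i) : ℤ) := by
  rw [catalan_succ']
  rw [Nat.sum_antidiagonal_eq_sum_range_succ (fun x y => catalan x * catalan y) n]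
  push_cast
  rfl

/-- Even-index convolution: `C_{2n+2} = 2 ∑ C_{2a} C_{2(n-a)+1}`. -/
private lemma conv_even (n : ℕ) :
    (catalan (2*n+2) : ℤ)
      = 2 * ∑ a ∈ range (n+1), (catalan (2*a) : ℤ) * (catalan (2*(n-a)+1) : ℤ) := by
  rw [show 2*n+2 = (2*n+1)+1 from rfl, catalan_conv,
    show 2*n+1+1 = 2*(n+1) from by ring,
    sum_range_even (fun i => (catalan i : ℤ) * (catalan (2*n+1-i) : ℤ)) (n+1)]
  have he : ∀ a ∈ range (n+1),
      (catalan (2*a) : ℤ) * (catalan (2*n+1-2*a) : ℤ)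
        = (catalan (2*a) : ℤ) * (catalan (2*(n-a)+1) : ℤ) := by
    intro a ha
    rw [mem_range] at ha
    have h : 2*n+1-2*a = 2*(n-a)+1 := by omega
    rw [h]
  have ho : ∀ a ∈ range (n+1),
      (catalan (2*a+1) : ℤ) * (catalan (2*n+1-(2*a+1)) : ℤ)
        = (catalan (2*(n-a)) : ℤ) * (catalan (2*a+1) : ℤ) := by
    intro a ha
    rw [mem_range] at ha
    have h : 2*n+1-(2*a+1) = 2*(n-a) := by omega
    rw [h, mul_comm]
  rw [sum_congr rfl he, sum_congr rfl ho]
  have hsymm : (∑ x ∈ range (n+1), (catalan (2*(n-x)) : ℤ) * (catalan (2*x+1) : ℤ))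
      = ∑ x ∈ range (n+1), (catalan (2*x) : ℤ) * (catalan (2*(n-x)+1) : ℤ) := by
    rw [← sum_range_reflect (fun a => (catalan (2*a) : ℤ) * (catalan (2*(n-a)+1) : ℤ)) (n+1)]
    refine sum_congr rfl fun a ha => ?_
    rw [mem_range] at ha
    have h1 : n+1-1-a = n-a := by omega
    simp only [h1]
    have h2 : n-(n-a) = a := by omega
    rw [h2]
  rw [hsymm]
  ring

/-- Odd-index convolution: `C_{2n+1} = ∑ C_{2a} C_{2(n-a)} + ∑ C_{2a+1} C_{2(n-1-a)+1}`. -/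
private lemma conv_odd (n : ℕ) :
    (catalan (2*n+1) : ℤ)
      = ∑ a ∈ range (n+1), (catalan (2*a) : ℤ) * (catalan (2*(n-a)) : ℤ)
        + ∑ a ∈ range n, (catalan (2*a+1) : ℤ) * (catalan (2*(n-1-a)+1) : ℤ) := by
  rw [catalan_conv,
    sum_range_odd (fun i => (catalan i : ℤ) * (catalan (2*n-i) : ℤ)) n]
  have he : ∀ a ∈ range (n+1),
      (catalan (2*a) : ℤ) * (catalan (2*n-2*a) : ℤ)
        = (catalan (2*a) : ℤ) * (catalan (2*(n-a)) : ℤ) := by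
    intro a ha
    rw [mem_range] at ha
    have h : 2*n-2*a = 2*(n-a) := by omega
    rw [h]
  have ho : ∀ a ∈ range n,
      (catalan (2*a+1) : ℤ) * (catalan (2*n-(2*a+1)) : ℤ)
        = (catalan (2*a+1) : ℤ) * (catalan (2*(n-1-a)+1) : ℤ) := by
    intro a ha
    rw [mem_range] at ha
    have h : 2*n-(2*a+1) = 2*(n-1-a)+1 := by omega
    rw [h]
  rw [sum_congr rfl he, sum_congr rfl ho]

/-- Convolution for `d_m = 4^m C_m`. -/
private lemma conv_d (n : ℕ) :
    4^(n+1) * (catalan (n+1) : ℤ)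
      = 4 * ∑ k ∈ range (n+1), (4^k * (catalan k : ℤ)) * (4^(n-k) * (catalan (n-k) : ℤ)) := by
  have h : ∀ k ∈ range (n+1),
      (4^k * (catalan k : ℤ)) * (4^(n-k) * (catalan (n-k) : ℤ))
        = 4^n * ((catalan k : ℤ) * (catalan (n-k) : ℤ)) := by
    intro k hk
    rw [mem_range] at hk
    have h1 : (4:ℤ)^k * 4^(n-k) = 4^n := by
      rw [← pow_add]
      congr 1
      omega
    calc (4^k * (catalan k : ℤ)) * (4^(n-k) * (catalan (n-k) : ℤ))
        = (4^k * 4^(n-k)) * ((catalan k : ℤ) * (catalan (n-k) : ℤ)) := by ring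
      _ = 4^n * ((catalan k : ℤ) * (catalan (n-k) : ℤ)) := by rw [h1]
  rw [sum_congr rfl h, ← mul_sum, ← catalan_conv]
  ring

private lemma hA : Eaux = 1 + (PowerSeries.X * (Eaux * Oaux) + PowerSeries.X * (Eaux * Oaux)) := by
  ext n
  rcases n with _ | n
  · simp [coeff_Eaux, PowerSeries.coeff_zero_eq_constantCoeff]
  · rw [map_add, map_add, coeff_succ_X_mul, PowerSeries.coeff_one, if_neg (Nat.succ_ne_zero n),
      PowerSeries.coeff_mul, Nat.sum_antidiagonal_eq_sum_range_succ_mk]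
    simp only [coeff_Eaux, coeff_Oaux]
    rw [show 2*(n+1) = 2*n+2 from by ring, conv_even]
    ring

private lemma hB : Oaux = Eaux^2 + PowerSeries.X * Oaux^2 := by
  ext n
  rw [map_add, sq, sq, PowerSeries.coeff_mul, Nat.sum_antidiagonal_eq_sum_range_succ_mk]
  simp only [coeff_Eaux, coeff_Oaux]
  rcases n with _ | n
  · rw [PowerSeries.coeff_zero_eq_constantCoeff, map_mul, PowerSeries.constantCoeff_X, zero_mul]
    simp
  · rw [coeff_succ_X_mul, PowerSeries.coeff_mul, Nat.sum_antidiagonal_eq_sum_range_succ_mk]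
    simp only [coeff_Oaux]
    rw [conv_odd (n+1)]
    have h1 : ∀ a ∈ range (n+1),
        (catalan (2*a+1) : ℤ) * (catalan (2*(n+1-1-a)+1) : ℤ)
          = (catalan (2*a+1) : ℤ) * (catalan (2*(n-a)+1) : ℤ) := by
      intro a ha
      rw [mem_range] at ha
      have h : n+1-1-a = n-a := by omega
      rw [h]
    rw [sum_congr rfl h1]

private lemma hD : Daux = 1 + (PowerSeries.X * (Daux * Daux) + PowerSeries.X * (Daux * Daux)
    + (PowerSeries.X * (Daux * Daux) + PowerSeries.X * (Daux * Daux))) := by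
  ext n
  rcases n with _ | n
  · simp [coeff_Daux, PowerSeries.coeff_zero_eq_constantCoeff]
  · rw [map_add, map_add, map_add, coeff_succ_X_mul, PowerSeries.coeff_one,
      if_neg (Nat.succ_ne_zero n), PowerSeries.coeff_mul, Nat.sum_antidiagonal_eq_sum_range_succ_mk]
    simp only [coeff_Daux]
    rw [conv_d n]
    ring

private lemma hShapiro : Daux = Eaux^2 := by
  have k1 : Eaux - 1 = 2 * PowerSeries.X * Eaux * Oaux := by linear_combination hA
  have k2 : PowerSeries.X * Oaux^2 = Oaux - Eaux^2 := by linear_combination - hB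
  have k3 : (Eaux - 1)^2 = 2*Eaux*(Eaux-1) - 4*PowerSeries.X*Eaux^4 := by
    calc (Eaux - 1)^2 = (2 * PowerSeries.X * Eaux * Oaux)^2 := by rw [k1]
    _ = 4*PowerSeries.X*Eaux^2*(PowerSeries.X * Oaux^2) := by ring
    _ = 4*PowerSeries.X*Eaux^2*(Oaux - Eaux^2) := by rw [k2]
    _ = 2*Eaux*(2 * PowerSeries.X * Eaux * Oaux) - 4*PowerSeries.X*Eaux^4 := by ring
    _ = 2*Eaux*(Eaux-1) - 4*PowerSeries.X*Eaux^4 := by rw [k1]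
  have hE4 : Eaux^2 = 1 + 4*PowerSeries.X*(Eaux^2)^2 := by linear_combination - k3
  have hD' : Daux = 1 + 4*PowerSeries.X*Daux^2 := by linear_combination hD
  have hprod : (Daux - Eaux^2) * (1 - 4*PowerSeries.X*(Daux + Eaux^2)) = 0 := by
    linear_combination hD' - hE4
  rcases mul_eq_zero.1 hprod with h | h
  · exact sub_eq_zero.mp h
  · exfalso
    have := congrArg (PowerSeries.constantCoeff (R := ℤ)) h
    simp only [map_sub, map_mul, map_one, PowerSeries.constantCoeff_X, map_zero] at this
    norm_num at this

private lemma hFinal :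
    Daux - Eaux = PowerSeries.X * (Daux * Oaux) + PowerSeries.X * (Daux * Oaux) := by
  have k1 : Eaux - 1 = 2 * PowerSeries.X * Eaux * Oaux := by linear_combination hA
  linear_combination Eaux * k1 + (1 - 2*PowerSeries.X*Oaux) * hShapiro

theorem catalan_weighted_sum (n : ℕ) (hn : 2 ≤ n) :
    ∑ i ∈ Finset.Icc 1 (n - 1),
        (2 : ℤ) ^ (2 * i - 1) * catalan (i - 1) * catalan (2 * n - 1 - 2 * i) =
      4 ^ (n - 1) * catalan (n - 1) - catalan (2 * n - 2) := by
  obtain ⟨t, rfl⟩ : ∃ t, n = t + 2 := ⟨n - 2, by omega⟩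
  have hc := congrArg (PowerSeries.coeff (R := ℤ) (t+1)) hFinal
  rw [map_sub, map_add, coeff_succ_X_mul, PowerSeries.coeff_mul,
    Nat.sum_antidiagonal_eq_sum_range_succ_mk] at hc
  simp only [coeff_Daux, coeff_Eaux, coeff_Oaux] at hc
  have e0 : t + 2 - 1 = t + 1 := by omega
  have e1 : 2 * (t + 2) - 2 = 2 * (t + 1) := by omega
  rw [e0, e1, ← Finset.Ico_add_one_right_eq_Icc, Finset.sum_Ico_eq_sum_range]
  have e2 : t + 1 + 1 - 1 = t + 1 := by omega
  rw [e2]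
  have hterm : ∀ a ∈ range (t+1),
      (2 : ℤ) ^ (2 * (1 + a) - 1) * (catalan (1 + a - 1) : ℤ)
          * (catalan (2 * (t + 2) - 1 - 2 * (1 + a)) : ℤ)
        = 4 ^ a * (catalan a : ℤ) * (catalan (2 * (t - a) + 1) : ℤ)
          + 4 ^ a * (catalan a : ℤ) * (catalan (2 * (t - a) + 1) : ℤ) := by
    intro a ha
    rw [mem_range] at ha
    have f1 : 2 * (1 + a) - 1 = 2 * a + 1 := by omega
    have f2 : 1 + a - 1 = a := by omega
    have f3 : 2 * (t + 2) - 1 - 2 * (1 + a) = 2 * (t - a) + 1 := by omega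
    rw [f1, f2, f3]
    have f4 : (2 : ℤ) ^ (2 * a + 1) = 2 * 4 ^ a := by
      rw [pow_succ, pow_mul]
      norm_num
      ring
    rw [f4]
    ring
  rw [sum_congr rfl hterm, sum_add_distrib]
  have hmul : ∀ a ∈ range (t+1),
      4 ^ a * (catalan a : ℤ) * (catalan (2 * (t - a) + 1) : ℤ)
        = (4 ^ a * (catalan a : ℤ)) * (catalan (2 * (t - a) + 1) : ℤ) := by
    intro a _
    ring
  rw [sum_congr rfl hmul]
  linarith [hc]
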